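/- For β in the open unit disc, the map φ_β(λ) = (βλ + conj(β), λ) maps the open unit disc into the symmetrised bidisc G. -/

import Mathlib

/-- The symmetrised bidisc. -/
def symBidisc : Set (ℂ × ℂ) :=
  {x | ∃ z w : ℂ, ‖z‖ < 1 ∧ ‖w‖ < 1 ∧ x = (z + w, z * w)}

/-- Key lemma: any root of `t^2 - (βl + conj β) t + l`, written in the factored
form `z (z - conj β) = l (β z - 1)`, lies in the open unit disc. -/
lemma root_lt_one (β l z : ℂ) (hβ : ‖β‖ < 1) (hl : ‖l‖ < 1)
    (heq : z * (z - (starRingEnd ℂ) β) = l * (β * z - 1)) : ‖z‖ < 1 := by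
  by_contra h
  push_neg at h
  have hzb : z - (starRingEnd ℂ) β ≠ 0 := by
    intro h0
    have hz : z = (starRingEnd ℂ) β := sub_eq_zero.mp h0
    rw [hz, RCLike.norm_conj] at h
    linarith
  have hzb' : (0:ℝ) < ‖z - (starRingEnd ℂ) β‖ := norm_pos_iff.mpr hzb
  have hbz : β * z - 1 ≠ 0 := by
    intro h0
    rw [h0, mul_zero] at heq
    rcases mul_eq_zero.mp heq with h1 | h1
    · rw [h1] at h; simp at h; linarith
    · exact hzb h1
  have hbz' : (0:ℝ) < ‖β * z - 1‖ := norm_pos_iff.mpr hbz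
  have key : Complex.normSq (z - (starRingEnd ℂ) β) - Complex.normSq (β * z - 1)
      = (Complex.normSq z - 1) * (1 - Complex.normSq β) := by
    simp only [Complex.normSq_apply, Complex.sub_re, Complex.sub_im, Complex.mul_re,
      Complex.mul_im, Complex.conj_re, Complex.conj_im, Complex.one_re, Complex.one_im]
    ring
  have hz1 : (1:ℝ) ≤ Complex.normSq z := by
    rw [Complex.normSq_eq_norm_sq]
    nlinarith
  have hb1 : Complex.normSq β ≤ 1 := by
    rw [Complex.normSq_eq_norm_sq]
    nlinarith [norm_nonneg β]
  have hle : ‖β * z - 1‖ ≤ ‖z - (starRingEnd ℂ) β‖ := by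
    have h1 : Complex.normSq (β * z - 1) ≤ Complex.normSq (z - (starRingEnd ℂ) β) := by
      nlinarith
    rw [Complex.normSq_eq_norm_sq, Complex.normSq_eq_norm_sq] at h1
    nlinarith [norm_nonneg (β * z - 1), norm_nonneg (z - (starRingEnd ℂ) β)]
  have hn : ‖z‖ * ‖z - (starRingEnd ℂ) β‖ = ‖l‖ * ‖β * z - 1‖ := by
    rw [← norm_mul, ← norm_mul, heq]
  have hlt : ‖l‖ * ‖β * z - 1‖ < ‖β * z - 1‖ := by nlinarith
  nlinarith

/-- For `β` in the open unit disc, `φ_β(λ) = (βλ + conj β, λ)` maps the disc into `G`. -/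
theorem stmt_3 (β l : ℂ) (hβ : ‖β‖ < 1) (hl : ‖l‖ < 1) :
    (β * l + (starRingEnd ℂ) β, l) ∈ symBidisc := by
  obtain ⟨d, hd2⟩ : ∃ d : ℂ, d ^ 2 = (β * l + (starRingEnd ℂ) β) ^ 2 - 4 * l :=
    ⟨((β * l + (starRingEnd ℂ) β) ^ 2 - 4 * l) ^ ((((2:ℕ)):ℂ)⁻¹),
      Complex.cpow_nat_inv_pow _ two_ne_zero⟩
  refine ⟨(β * l + (starRingEnd ℂ) β + d) / 2, (β * l + (starRingEnd ℂ) β - d) / 2, ?_, ?_, ?_⟩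
  · exact root_lt_one β l _ hβ hl (by linear_combination hd2 / 4)
  · exact root_lt_one β l _ hβ hl (by linear_combination hd2 / 4)
  · simp only [Prod.mk.injEq]
    exact ⟨by ring, by linear_combination hd2 / 4⟩
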